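/- Under the same one-way bipartite setup, the sum-normalized positive solution of the smoothed PageRank equation is unique, and it is an affine transformation with positive leading coefficient of PR_bip; consequently PR_bip induces the same ranking (ordering) of the nodes in V as the sum-normalized PageRank solution. -/

import Mathlib

open Finset

/-- On a one-way bipartite graph the sum-normalized positive solution of the
smoothed PageRank equation is unique, and it is an affine transformation (with
positive leading coefficient) of `PR_bip`; hence `PR_bip` induces the same
ranking of the nodes as the PageRank solution. -/
theorem pagerank_unique_and_affine_of_prBip
    {V : Type*} [Fintype V] [Nonempty V]
    (wt : V → V → ℝ) (L R : Finset V) (lam : ℝ)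
    (hlam : 0 < lam) (hlam' : lam < 1)
    (hLne : L.Nonempty) (hRne : R.Nonempty)
    (hcover : ∀ v : V, v ∈ L ∨ v ∈ R)
    (hdisj : ∀ v : V, ¬(v ∈ L ∧ v ∈ R))
    (hnn : ∀ u v : V, 0 ≤ wt u v)
    (hbip : ∀ u v : V, wt u v ≠ 0 → u ∈ L ∧ v ∈ R)
    (hposout : ∀ u ∈ L, 0 < ∑ v : V, wt u v)
    (out : V → ℝ) (hout : ∀ u : V, out u = ∑ v : V, wt u v)
    (PRbip : V → ℝ)
    (hPRbip : ∀ v : V,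
      PRbip v = ∑ u ∈ univ.filter (fun u => 0 < out u), wt u v / out u) :
    ∃ f : V → ℝ,
      ((∀ v : V, 0 < f v) ∧ (∑ v : V, f v) = 1 ∧
        (∀ v : V, f v =
          (∑ u ∈ univ.filter (fun u => 0 < out u),
            ((1 - lam) / (Fintype.card V : ℝ) + lam * wt u v / out u) * f u) +
          ∑ u ∈ univ.filter (fun u => out u = 0),
            (1 / (Fintype.card V : ℝ)) * f u)) ∧
      (∀ g : V → ℝ,
        ((∀ v : V, 0 < g v) ∧ (∑ v : V, g v) = 1 ∧
          (∀ v : V, g v =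
            (∑ u ∈ univ.filter (fun u => 0 < out u),
              ((1 - lam) / (Fintype.card V : ℝ) + lam * wt u v / out u) * g u) +
            ∑ u ∈ univ.filter (fun u => out u = 0),
              (1 / (Fintype.card V : ℝ)) * g u)) → g = f) ∧
      (∃ a b : ℝ, 0 < a ∧ ∀ v : V, f v = a * PRbip v + b) ∧
      (∀ u v : V, PRbip u < PRbip v ↔ f u < f v) := by
  classical
  have hn : (0:ℝ) < (Fintype.card V : ℝ) := by exact_mod_cast Fintype.card_pos
  set n : ℝ := (Fintype.card V : ℝ) with hn_def
  have houtnn : ∀ u, 0 ≤ out u := by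
    intro u; rw [hout]; exact Finset.sum_nonneg fun v _ => hnn u v
  have hmemL : ∀ u, 0 < out u ↔ u ∈ L := by
    intro u
    constructor
    · intro h
      by_contra hu
      have h0 : out u = 0 := by
        rw [hout]
        refine Finset.sum_eq_zero fun v _ => ?_
        by_contra hw
        exact hu (hbip u v hw).1
      linarith
    · intro h
      rw [hout]
      exact hposout u h
  have hfL : univ.filter (fun u => 0 < out u) = L := by
    ext u; simp [hmemL u]
  have hf0 : univ.filter (fun u => out u = 0) =
      univ.filter (fun u => ¬ 0 < out u) := by
    ext u
    simp only [mem_filter, mem_univ, true_and]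
    constructor
    · intro h; rw [h]; exact lt_irrefl 0
    · intro h; exact le_antisymm (not_lt.mp h) (houtnn u)
  have hsplit : ∀ g : V → ℝ,
      (∑ u ∈ L, g u) + (∑ u ∈ univ.filter (fun u => out u = 0), g u)
        = ∑ u, g u := by
    intro g
    rw [hf0, ← hfL]
    exact Finset.sum_filter_add_sum_filter_not univ _ g
  have hwt0L : ∀ u v, v ∈ L → wt u v = 0 := by
    intro u v hv
    by_contra hw
    exact hdisj v ⟨hv, (hbip u v hw).2⟩
  have hPRnn : ∀ v, 0 ≤ PRbip v := by
    intro v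
    rw [hPRbip]
    refine Finset.sum_nonneg fun u hu => ?_
    exact div_nonneg (hnn u v) (mem_filter.mp hu).2.le
  have hPR0 : ∀ v ∈ L, PRbip v = 0 := by
    intro v hv
    rw [hPRbip]
    refine Finset.sum_eq_zero fun u _ => ?_
    rw [hwt0L u v hv, zero_div]
  have hPRsum : (∑ v, PRbip v) = (L.card : ℝ) := by
    calc (∑ v, PRbip v) = ∑ v, ∑ u ∈ L, wt u v / out u := by
          refine Finset.sum_congr rfl fun v _ => ?_
          rw [hPRbip, hfL]
      _ = ∑ u ∈ L, ∑ v, wt u v / out u := Finset.sum_comm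
      _ = ∑ u ∈ L, 1 := by
          refine Finset.sum_congr rfl fun u hu => ?_
          have h := hposout u hu
          rw [← Finset.sum_div, ← hout]
          exact div_self (by rw [hout]; linarith)
      _ = (L.card : ℝ) := by simp
  have hLcard : (0:ℝ) ≤ (L.card : ℝ) := Nat.cast_nonneg _
  have hden : 0 < n + lam * L.card := by nlinarith
  set c : ℝ := 1 / (n + lam * L.card) with hc_def
  have hc : 0 < c := by rw [hc_def]; exact one_div_pos.mpr hden
  have hc1 : c * (n + lam * L.card) = 1 := by
    rw [hc_def]; exact one_div_mul_cancel hden.ne'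
  set f : V → ℝ := fun v => c * (1 + lam * PRbip v) with hf_def
  have hfpos : ∀ v, 0 < f v := by
    intro v
    have h1 := hPRnn v
    have h2 : 0 < 1 + lam * PRbip v := by nlinarith
    exact mul_pos hc h2
  have hsum1 : (∑ v, (1 + lam * PRbip v)) = n + lam * L.card := by
    rw [Finset.sum_add_distrib, ← Finset.mul_sum, hPRsum]
    simp [hn_def, Finset.card_univ]
  have hsumform : ∀ d : ℝ, (∑ v, d * (1 + lam * PRbip v)) = d * (n + lam * L.card) := by
    intro d
    rw [← Finset.mul_sum, hsum1]
  have hsumf : (∑ v, f v) = 1 := by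
    simp only [hf_def]
    rw [hsumform, hc1]
  have hfconstL : ∀ u ∈ L, f u = c := by
    intro u hu; simp [hf_def, hPR0 u hu]
  -- rewrite the RHS of the PageRank equation
  have hRHS : ∀ (g : V → ℝ) (v : V),
      ((∑ u ∈ univ.filter (fun u => 0 < out u),
          ((1 - lam) / n + lam * wt u v / out u) * g u) +
        ∑ u ∈ univ.filter (fun u => out u = 0), (1 / n) * g u)
      = (1 - lam) / n * (∑ u ∈ L, g u)
        + lam * (∑ u ∈ L, (wt u v / out u) * g u)
        + (1 / n) * (∑ u ∈ univ.filter (fun u => out u = 0), g u) := by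
    intro g v
    rw [hfL]
    have h1 : ∑ u ∈ L, ((1 - lam) / n + lam * wt u v / out u) * g u
        = ∑ u ∈ L, ((1 - lam) / n * g u + lam * (wt u v / out u * g u)) := by
      refine Finset.sum_congr rfl fun u _ => ?_
      ring
    rw [h1, Finset.sum_add_distrib, ← Finset.mul_sum, ← Finset.mul_sum, ← Finset.mul_sum]
  have hPRmul : ∀ (g : V → ℝ) (d : ℝ), (∀ u ∈ L, g u = d) →
      ∀ v, (∑ u ∈ L, (wt u v / out u) * g u) = PRbip v * d := by
    intro g d hg v
    rw [hPRbip v, hfL, Finset.sum_mul]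
    refine Finset.sum_congr rfl fun u hu => ?_
    rw [hg u hu]
  have hsumfL : (∑ u ∈ L, f u) = c * L.card := by
    rw [Finset.sum_congr rfl hfconstL, Finset.sum_const, nsmul_eq_mul, mul_comm]
  have hsumf0 : (∑ u ∈ univ.filter (fun u => out u = 0), f u) = 1 - c * L.card := by
    have := hsplit f
    rw [hsumf, hsumfL] at this
    linarith
  have hfeq : ∀ v : V, f v =
      (∑ u ∈ univ.filter (fun u => 0 < out u),
        ((1 - lam) / n + lam * wt u v / out u) * f u) +
      ∑ u ∈ univ.filter (fun u => out u = 0), (1 / n) * f u := by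
    intro v
    rw [hRHS f v, hPRmul f c hfconstL v, hsumfL, hsumf0]
    have hfv : f v = c * (1 + lam * PRbip v) := rfl
    rw [hfv]
    field_simp
    nlinarith [hc1, hPRnn v]
  refine ⟨f, ⟨hfpos, hsumf, hfeq⟩, ?_, ⟨c * lam, c, mul_pos hc hlam, fun v => by
      rw [hf_def]; ring⟩, ?_⟩
  · -- uniqueness
    rintro g ⟨-, hgsum, hgeq⟩
    set SL : ℝ := ∑ u ∈ L, g u with hSL
    set SR : ℝ := ∑ u ∈ univ.filter (fun u => out u = 0), g u with hSR
    set cg : ℝ := (1 - lam) / n * SL + (1 / n) * SR with hcg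
    have hgL : ∀ u ∈ L, g u = cg := by
      intro v hv
      have h := hgeq v
      rw [hRHS g v] at h
      have hz : (∑ u ∈ L, (wt u v / out u) * g u) = 0 := by
        refine Finset.sum_eq_zero fun u _ => ?_
        rw [hwt0L u v hv, zero_div, zero_mul]
      rw [hz] at h
      rw [h, hcg]; ring
    have hgall : ∀ v, g v = cg * (1 + lam * PRbip v) := by
      intro v
      have h := hgeq v
      rw [hRHS g v, hPRmul g cg hgL v] at h
      have hSLc : SL = cg * L.card := by
        rw [hSL, Finset.sum_congr rfl hgL, Finset.sum_const, nsmul_eq_mul, mul_comm]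
      rw [h, hcg]
      ring
    have hcgsum : cg * (n + lam * L.card) = 1 := by
      rw [← hgsum, Finset.sum_congr rfl fun v _ => hgall v, hsumform]
    have hcgc : cg = c := by
      have := mul_right_cancel₀ hden.ne' (hc1 ▸ hcgsum)
      exact this
    funext v
    rw [hgall v, hcgc]
  · -- ranking
    intro u v
    simp only [hf_def]
    constructor
    · intro h
      exact mul_lt_mul_of_pos_left (by nlinarith [mul_lt_mul_of_pos_left h hlam]) hc
    · intro h
      have h2 := lt_of_mul_lt_mul_left h hc.le
      have h3 : lam * PRbip u < lam * PRbip v := by linarith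
      exact lt_of_mul_lt_mul_left h3 hlam.le
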